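/- Union lower bound witness: let m, n ≥ 2 and, over the alphabet {a,b}, let L₁ = { b a^{k(m-1)} : k ≥ 0 } and L₂ = { a b^{k(n-1)} : k ≥ 0 }. Then L₁ and L₂ are suffix-free, NSC(L₁) = m, NSC(L₂) = n, and NSC(L₁ ∪ L₂) = m + n − 1. -/

import Mathlib

open Computability

/-- A nondeterministic finite automaton with a single start state and
no ε-transitions. -/
structure SNFA (α : Type) (σ : Type) where
  step : σ → α → Set σ
  start : σ
  accept : Set σ

namespace SNFA

variable {α σ : Type}

/-- The set of states reachable from some state in `S` by one transition on `a`. -/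
def stepSet (M : SNFA α σ) (S : Set σ) (a : α) : Set σ :=
  ⋃ s ∈ S, M.step s a

/-- The set of states reachable from the set `S` of states by reading the word `w`. -/
def evalFrom (M : SNFA α σ) (S : Set σ) (w : List α) : Set σ :=
  w.foldl M.stepSet S

/-- The language accepted by `M`: all words spelled out by a path
from the start state to an accepting state. -/
def accepts (M : SNFA α σ) : Language α :=
  {w | ∃ q ∈ M.accept, q ∈ M.evalFrom {M.start} w}

end SNFA

/-- A language is suffix-free if no word of the language is a proper suffix
of another word of the language. -/
def SuffixFree {α : Type} (L : Language α) : Prop :=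
  ∀ u v : List α, u ∈ L → v ∈ L → u <:+ v → u = v

/-- `NSCle L k`: there is an NFA with at most `k` states accepting `L`
(so the nondeterministic state complexity of `L` is at most `k`). -/
def NSCle {α : Type} (L : Language α) (k : ℕ) : Prop :=
  ∃ (σ : Type) (x : Fintype σ) (M : SNFA α σ), M.accepts = L ∧ @Fintype.card σ x ≤ k

/-- `NSCge L k`: every NFA accepting `L` has at least `k` states
(so the nondeterministic state complexity of `L` is at least `k`). -/
def NSCge {α : Type} (L : Language α) (k : ℕ) : Prop :=
  ∀ (σ : Type) [Fintype σ] (M : SNFA α σ), M.accepts = L → k ≤ Fintype.card σ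

/-- `NSCeq L m`: the nondeterministic state complexity of `L` is exactly `m`:
some NFA with `m` states accepts `L` and every NFA accepting `L` has at least
`m` states. -/
def NSCeq {α : Type} (L : Language α) (m : ℕ) : Prop :=
  NSCle L m ∧ NSCge L m



namespace SNFA

variable {α σ : Type}

theorem evalFrom_nil' (M : SNFA α σ) (S : Set σ) : M.evalFrom S [] = S := rfl

theorem evalFrom_cons' (M : SNFA α σ) (S : Set σ) (c : α) (w : List α) :
    M.evalFrom S (c :: w) = M.evalFrom (M.stepSet S c) w := rfl

theorem stepSet_singleton' (M : SNFA α σ) (s : σ) (a : α) :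
    M.stepSet {s} a = M.step s a := by simp [stepSet]

theorem stepSet_empty' (M : SNFA α σ) (a : α) : M.stepSet ∅ a = ∅ := by simp [stepSet]

theorem evalFrom_empty' (M : SNFA α σ) (w : List α) : M.evalFrom ∅ w = ∅ := by
  induction w with
  | nil => rfl
  | cons c w ih => rw [evalFrom_cons', stepSet_empty', ih]

theorem stepSet_mono' (M : SNFA α σ) {S T : Set σ} (h : S ⊆ T) (a : α) :
    M.stepSet S a ⊆ M.stepSet T a := by
  intro q hq
  simp only [stepSet, Set.mem_iUnion] at hq ⊢
  obtain ⟨s, hs, h2⟩ := hq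
  exact ⟨s, h hs, h2⟩

theorem evalFrom_mono' (M : SNFA α σ) {S T : Set σ} (h : S ⊆ T) (w : List α) :
    M.evalFrom S w ⊆ M.evalFrom T w := by
  induction w generalizing S T with
  | nil => exact h
  | cons c w ih => exact ih (M.stepSet_mono' h c)

theorem exists_mem_of_mem_evalFrom (M : SNFA α σ) {S : Set σ} {q : σ} {w : List α}
    (h : q ∈ M.evalFrom S w) : ∃ s ∈ S, q ∈ M.evalFrom {s} w := by
  induction w generalizing S with
  | nil => exact ⟨q, h, rfl⟩
  | cons c w ih =>
    rw [evalFrom_cons'] at h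
    obtain ⟨t, ht, hq⟩ := ih h
    simp only [stepSet, Set.mem_iUnion] at ht
    obtain ⟨s, hs, hts⟩ := ht
    refine ⟨s, hs, ?_⟩
    rw [evalFrom_cons', stepSet_singleton']
    exact M.evalFrom_mono' (by simpa using hts) w hq

theorem evalFrom_append' (M : SNFA α σ) (S : Set σ) (u v : List α) :
    M.evalFrom S (u ++ v) = M.evalFrom (M.evalFrom S u) v := by
  simp [evalFrom, List.foldl_append]

/-- The fooling set lower bound. -/
theorem fooling {ι : Type} [Fintype σ] [Fintype ι] (M : SNFA α σ)
    (x y : ι → List α)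
    (hmem : ∀ i, x i ++ y i ∈ M.accepts)
    (hcross : ∀ i j, x i ++ y j ∈ M.accepts → x j ++ y i ∈ M.accepts → i = j) :
    Fintype.card ι ≤ Fintype.card σ := by
  have key : ∀ i : ι, ∃ p : σ, p ∈ M.evalFrom {M.start} (x i) ∧
      ∃ q ∈ M.accept, q ∈ M.evalFrom {p} (y i) := by
    intro i
    obtain ⟨q, hq, hqe⟩ := hmem i
    rw [M.evalFrom_append'] at hqe
    obtain ⟨p, hp, hqp⟩ := M.exists_mem_of_mem_evalFrom hqe
    exact ⟨p, hp, q, hq, hqp⟩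
  choose f hf1 hf2 using key
  have hinj : Function.Injective f := by
    intro i j hij
    have hacc : ∀ a b : ι, f a = f b → x a ++ y b ∈ M.accepts := by
      intro a b hab
      obtain ⟨q, hq, hqe⟩ := hf2 b
      refine ⟨q, hq, ?_⟩
      rw [M.evalFrom_append']
      exact M.evalFrom_mono' (Set.singleton_subset_iff.mpr (hab ▸ hf1 a)) (y b) hqe
    exact hcross i j (hacc i j hij) (hacc j i hij.symm)
  simpa using Fintype.card_le_of_injective f hinj

end SNFA

/-- `k * d` in the window `(0, 2d)` must equal `d`. -/
theorem mul_window {d s k : ℕ} (h : s = k * d) (h1 : 0 < s) (h2 : s < 2 * d) : s = d := by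
  match k with
  | 0 => omega
  | 1 => omega
  | (k + 2) =>
    exfalso
    have h3 : 2 * d ≤ (k + 2) * d := Nat.mul_le_mul_right d (by omega)
    omega
section Machines

/-- One-letter-then-cycle NFA: reads `c` from the start state into a cycle of
length `d` on the other letter, accepting at the cycle's origin. -/
def chainNFA (d : ℕ) (c : Fin 2) : SNFA (Fin 2) (Option (ZMod d)) where
  step q a := match q with
    | none => if a = c then {some 0} else ∅
    | some z => if a = c then ∅ else {some (z + 1)}
  start := none
  accept := {some 0}

theorem chainNFA_eval_all (d : ℕ) (c : Fin 2) (w : List (Fin 2)) (z : ZMod d)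
    (h : ∀ a ∈ w, a ≠ c) :
    (chainNFA d c).evalFrom {some z} w = {some (z + w.length)} := by
  induction w generalizing z with
  | nil => simp [SNFA.evalFrom_nil']
  | cons a w ih =>
    rw [SNFA.evalFrom_cons', SNFA.stepSet_singleton']
    have ha : a ≠ c := h a List.mem_cons_self
    have hstep : (chainNFA d c).step (some z) a = {some (z + 1)} := by
      simp [chainNFA, ha]
    rw [hstep, ih (z + 1) (fun b hb => h b (List.mem_cons_of_mem a hb))]
    have : z + 1 + (w.length : ZMod d) = z + ((a :: w).length : ZMod d) := by
      simp [List.length_cons]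
      push_cast
      ring
    rw [this]

theorem chainNFA_eval_bad (d : ℕ) (c : Fin 2) (w : List (Fin 2)) (z : ZMod d)
    (h : ∃ a ∈ w, a = c) :
    (chainNFA d c).evalFrom {some z} w = ∅ := by
  induction w generalizing z with
  | nil => simp at h
  | cons a w ih =>
    rw [SNFA.evalFrom_cons', SNFA.stepSet_singleton']
    by_cases ha : a = c
    · have hstep : (chainNFA d c).step (some z) a = ∅ := by simp [chainNFA, ha]
      rw [hstep, SNFA.evalFrom_empty']
    · have hstep : (chainNFA d c).step (some z) a = {some (z + 1)} := by
        simp [chainNFA, ha]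
      rw [hstep]
      apply ih
      rcases h with ⟨b, hb, rfl⟩
      rcases List.mem_cons.mp hb with rfl | hb
      · exact absurd rfl ha
      · exact ⟨b, hb, rfl⟩

theorem fin2_eq_of_ne {a c c' : Fin 2} (hcc : c ≠ c') (h : a ≠ c) : a = c' := by
  fin_cases a <;> fin_cases c <;> fin_cases c' <;> simp_all

theorem chainNFA_accepts (d : ℕ) (c c' : Fin 2) (hcc : c ≠ c') :
    (chainNFA d c).accepts =
      {w : List (Fin 2) | ∃ k : ℕ, w = c :: List.replicate (k * d) c'} := by
  ext w
  cases w with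
  | nil =>
    constructor
    · rintro ⟨q, hq, hqe⟩
      rw [SNFA.evalFrom_nil'] at hqe
      simp only [Set.mem_singleton_iff] at hqe
      subst hqe
      simp [chainNFA] at hq
    · rintro ⟨k, hk⟩
      simp at hk
  | cons a w =>
    constructor
    · rintro ⟨q, hq, hqe⟩
      rw [SNFA.evalFrom_cons', SNFA.stepSet_singleton'] at hqe
      by_cases ha : a = c
      · subst ha
        have hstep : (chainNFA d a).step none a = {some 0} := by simp [chainNFA]
        have hstart : (chainNFA d a).start = none := rfl
        rw [hstart, hstep] at hqe
        by_cases hall : ∀ b ∈ w, b ≠ a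
        · rw [chainNFA_eval_all d a w 0 hall] at hqe
          simp only [Set.mem_singleton_iff] at hqe
          have hq0 : q = some 0 := by simpa [chainNFA] using hq
          rw [hq0] at hqe
          have hz : ((w.length : ℕ) : ZMod d) = 0 := by
            have := hqe.symm
            simpa using this
          have hdvd : d ∣ w.length := (ZMod.natCast_eq_zero_iff _ _).mp hz
          obtain ⟨k, hk⟩ := hdvd
          refine ⟨k, ?_⟩
          have hw : w = List.replicate w.length c' := by
            rw [List.eq_replicate_length]
            exact fun b hb => fin2_eq_of_ne hcc (hall b hb)
          rw [List.cons_inj_right]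
          rw [hw]
          congr 1
          rw [hk, Nat.mul_comm]
        · push_neg at hall
          obtain ⟨b, hb, hbc⟩ := hall
          rw [chainNFA_eval_bad d a w 0 ⟨b, hb, not_not.mp (by simpa using hbc)⟩] at hqe
          exact absurd hqe (Set.notMem_empty q)
      · have hstep : (chainNFA d c).step none a = ∅ := by simp [chainNFA, ha]
        have hstart : (chainNFA d c).start = none := rfl
        rw [hstart, hstep, SNFA.evalFrom_empty'] at hqe
        exact absurd hqe (Set.notMem_empty q)
    · rintro ⟨k, hk⟩
      rw [List.cons_eq_cons] at hk
      obtain ⟨ha, rfl⟩ := hk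
      subst ha
      refine ⟨some 0, by simp [chainNFA], ?_⟩
      rw [SNFA.evalFrom_cons', SNFA.stepSet_singleton']
      have hstep : (chainNFA d a).step none a = {some 0} := by simp [chainNFA]
      have hstart : (chainNFA d a).start = none := rfl
      rw [hstart, hstep]
      rw [chainNFA_eval_all d a _ 0 (fun b hb => by
        rw [List.eq_of_mem_replicate hb]; exact hcc.symm)]
      simp [ZMod.natCast_eq_zero_iff, Dvd.intro k rfl]

end Machines
section UnionMachine

/-- NFA for `b(a^d)* ∪ a(b^e)*` (with `a = 0`, `b = 1`). -/
def unionNFA (d e : ℕ) : SNFA (Fin 2) (Option (ZMod d ⊕ ZMod e)) where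
  step q a := match q with
    | none => if a = 1 then {some (Sum.inl 0)} else {some (Sum.inr 0)}
    | some (Sum.inl z) => if a = 0 then {some (Sum.inl (z + 1))} else ∅
    | some (Sum.inr z) => if a = 1 then {some (Sum.inr (z + 1))} else ∅
  start := none
  accept := {some (Sum.inl 0), some (Sum.inr 0)}

theorem unionNFA_eval_inl_all (d e : ℕ) (w : List (Fin 2)) (z : ZMod d)
    (h : ∀ a ∈ w, a = 0) :
    (unionNFA d e).evalFrom {some (Sum.inl z)} w = {some (Sum.inl (z + w.length))} := by
  induction w generalizing z with
  | nil => simp [SNFA.evalFrom_nil']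
  | cons a w ih =>
    rw [SNFA.evalFrom_cons', SNFA.stepSet_singleton']
    have ha : a = 0 := h a List.mem_cons_self
    have hstep : (unionNFA d e).step (some (Sum.inl z)) a = {some (Sum.inl (z + 1))} := by
      simp [unionNFA, ha]
    rw [hstep, ih (z + 1) (fun b hb => h b (List.mem_cons_of_mem a hb))]
    have : z + 1 + (w.length : ZMod d) = z + ((a :: w).length : ZMod d) := by
      simp [List.length_cons]; ring
    rw [this]

theorem unionNFA_eval_inl_bad (d e : ℕ) (w : List (Fin 2)) (z : ZMod d)
    (h : ∃ a ∈ w, a ≠ 0) :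
    (unionNFA d e).evalFrom {some (Sum.inl z)} w = ∅ := by
  induction w generalizing z with
  | nil => simp at h
  | cons a w ih =>
    rw [SNFA.evalFrom_cons', SNFA.stepSet_singleton']
    by_cases ha : a = 0
    · have hstep : (unionNFA d e).step (some (Sum.inl z)) a = {some (Sum.inl (z + 1))} := by
        simp [unionNFA, ha]
      rw [hstep]
      apply ih
      rcases h with ⟨b, hb, hbne⟩
      rcases List.mem_cons.mp hb with rfl | hb
      · exact absurd ha hbne
      · exact ⟨b, hb, hbne⟩
    · have hstep : (unionNFA d e).step (some (Sum.inl z)) a = ∅ := by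
        simp [unionNFA, ha]
      rw [hstep, SNFA.evalFrom_empty']

theorem unionNFA_eval_inr_all (d e : ℕ) (w : List (Fin 2)) (z : ZMod e)
    (h : ∀ a ∈ w, a = 1) :
    (unionNFA d e).evalFrom {some (Sum.inr z)} w = {some (Sum.inr (z + w.length))} := by
  induction w generalizing z with
  | nil => simp [SNFA.evalFrom_nil']
  | cons a w ih =>
    rw [SNFA.evalFrom_cons', SNFA.stepSet_singleton']
    have ha : a = 1 := h a List.mem_cons_self
    have hstep : (unionNFA d e).step (some (Sum.inr z)) a = {some (Sum.inr (z + 1))} := by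
      simp [unionNFA, ha]
    rw [hstep, ih (z + 1) (fun b hb => h b (List.mem_cons_of_mem a hb))]
    have : z + 1 + (w.length : ZMod e) = z + ((a :: w).length : ZMod e) := by
      simp [List.length_cons]; ring
    rw [this]

theorem unionNFA_eval_inr_bad (d e : ℕ) (w : List (Fin 2)) (z : ZMod e)
    (h : ∃ a ∈ w, a ≠ 1) :
    (unionNFA d e).evalFrom {some (Sum.inr z)} w = ∅ := by
  induction w generalizing z with
  | nil => simp at h
  | cons a w ih =>
    rw [SNFA.evalFrom_cons', SNFA.stepSet_singleton']
    by_cases ha : a = 1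
    · have hstep : (unionNFA d e).step (some (Sum.inr z)) a = {some (Sum.inr (z + 1))} := by
        simp [unionNFA, ha]
      rw [hstep]
      apply ih
      rcases h with ⟨b, hb, hbne⟩
      rcases List.mem_cons.mp hb with rfl | hb
      · exact absurd ha hbne
      · exact ⟨b, hb, hbne⟩
    · have hstep : (unionNFA d e).step (some (Sum.inr z)) a = ∅ := by
        simp [unionNFA, ha]
      rw [hstep, SNFA.evalFrom_empty']

theorem unionNFA_accepts (d e : ℕ) :
    (unionNFA d e).accepts =
      ({w : List (Fin 2) | ∃ k : ℕ, w = 1 :: List.replicate (k * d) 0} ⊔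
       {w : List (Fin 2) | ∃ k : ℕ, w = 0 :: List.replicate (k * e) 1}) := by
  ext w
  have hsup : ∀ v : List (Fin 2),
      (v ∈ ({w : List (Fin 2) | ∃ k : ℕ, w = 1 :: List.replicate (k * d) 0} ⊔
        {w : List (Fin 2) | ∃ k : ℕ, w = 0 :: List.replicate (k * e) 1} : Language (Fin 2)) ↔
      ((∃ k : ℕ, v = 1 :: List.replicate (k * d) 0) ∨
       (∃ k : ℕ, v = 0 :: List.replicate (k * e) 1))) := fun v => Iff.rfl
  refine Iff.trans ?_ (hsup w).symm
  cases w with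
  | nil =>
    constructor
    · rintro ⟨q, hq, hqe⟩
      rw [SNFA.evalFrom_nil'] at hqe
      simp only [Set.mem_singleton_iff] at hqe
      subst hqe
      simp [unionNFA] at hq
    · rintro (⟨k, hk⟩ | ⟨k, hk⟩) <;> simp at hk
  | cons a w =>
    have hstart : (unionNFA d e).start = none := rfl
    constructor
    · rintro ⟨q, hq, hqe⟩
      rw [SNFA.evalFrom_cons', SNFA.stepSet_singleton', hstart] at hqe
      by_cases ha : a = 1
      · subst ha
        have hstep : (unionNFA d e).step none 1 = {some (Sum.inl 0)} := by simp [unionNFA]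
        rw [hstep] at hqe
        by_cases hall : ∀ b ∈ w, b = (0 : Fin 2)
        · rw [unionNFA_eval_inl_all d e w 0 hall] at hqe
          simp only [Set.mem_singleton_iff] at hqe
          subst hqe
          have hq0 : (0 : ZMod d) + (w.length : ZMod d) = 0 := by
            simpa [unionNFA] using hq
          have hz : ((w.length : ℕ) : ZMod d) = 0 := by simpa using hq0
          obtain ⟨k, hk⟩ := (ZMod.natCast_eq_zero_iff _ _).mp hz
          left
          refine ⟨k, ?_⟩
          have hw : w = List.replicate w.length 0 := by
            rw [List.eq_replicate_length]; exact hall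
          rw [List.cons_inj_right, hw]
          congr 1
          rw [hk, Nat.mul_comm]
        · push_neg at hall
          rw [unionNFA_eval_inl_bad d e w 0 hall] at hqe
          exact absurd hqe (Set.notMem_empty q)
      · have ha0 : a = 0 := by omega
        subst ha0
        have hstep : (unionNFA d e).step none 0 = {some (Sum.inr 0)} := by simp [unionNFA]
        rw [hstep] at hqe
        by_cases hall : ∀ b ∈ w, b = (1 : Fin 2)
        · rw [unionNFA_eval_inr_all d e w 0 hall] at hqe
          simp only [Set.mem_singleton_iff] at hqe
          subst hqe
          have hq0 : (0 : ZMod e) + (w.length : ZMod e) = 0 := by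
            simpa [unionNFA] using hq
          have hz : ((w.length : ℕ) : ZMod e) = 0 := by simpa using hq0
          obtain ⟨k, hk⟩ := (ZMod.natCast_eq_zero_iff _ _).mp hz
          right
          refine ⟨k, ?_⟩
          have hw : w = List.replicate w.length 1 := by
            rw [List.eq_replicate_length]; exact hall
          rw [List.cons_inj_right, hw]
          congr 1
          rw [hk, Nat.mul_comm]
        · push_neg at hall
          rw [unionNFA_eval_inr_bad d e w 0 hall] at hqe
          exact absurd hqe (Set.notMem_empty q)
    · rintro (⟨k, hk⟩ | ⟨k, hk⟩)
      · obtain ⟨ha, rfl⟩ := List.cons_eq_cons.mp hk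
        subst ha
        refine ⟨some (Sum.inl 0), by simp [unionNFA], ?_⟩
        rw [SNFA.evalFrom_cons', SNFA.stepSet_singleton', hstart]
        have hstep : (unionNFA d e).step none 1 = {some (Sum.inl 0)} := by simp [unionNFA]
        rw [hstep]
        rw [unionNFA_eval_inl_all d e _ 0 (fun b hb => List.eq_of_mem_replicate hb)]
        simp [ZMod.natCast_eq_zero_iff, Dvd.intro k rfl]
      · obtain ⟨ha, rfl⟩ := List.cons_eq_cons.mp hk
        subst ha
        refine ⟨some (Sum.inr 0), by simp [unionNFA], ?_⟩
        rw [SNFA.evalFrom_cons', SNFA.stepSet_singleton', hstart]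
        have hstep : (unionNFA d e).step none 0 = {some (Sum.inr 0)} := by simp [unionNFA]
        rw [hstep]
        rw [unionNFA_eval_inr_all d e _ 0 (fun b hb => List.eq_of_mem_replicate hb)]
        simp [ZMod.natCast_eq_zero_iff, Dvd.intro k rfl]

end UnionMachine
section LangLemmas

theorem mem_chainL {d t : ℕ} {c c' : Fin 2} :
    (c :: List.replicate t c') ∈
      ({w : List (Fin 2) | ∃ k : ℕ, w = c :: List.replicate (k * d) c'} : Language (Fin 2)) ↔
      ∃ k, t = k * d := by
  constructor
  · rintro ⟨k, hk⟩
    refine ⟨k, ?_⟩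
    have := congrArg List.length hk
    simpa using this
  · rintro ⟨k, rfl⟩
    exact ⟨k, rfl⟩

theorem not_mem_chainL_of_mem {d : ℕ} {c c' e : Fin 2} (he : e ≠ c') {u : List (Fin 2)}
    (hu : e ∈ u) :
    (c :: u) ∉
      ({w : List (Fin 2) | ∃ k : ℕ, w = c :: List.replicate (k * d) c'} : Language (Fin 2)) := by
  rintro ⟨k, hk⟩
  obtain ⟨-, rfl⟩ := List.cons_eq_cons.mp hk
  exact he (List.eq_of_mem_replicate hu)

theorem not_mem_chainL_of_head {d : ℕ} {c c' e : Fin 2} (he : e ≠ c) (u : List (Fin 2)) :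
    (e :: u) ∉
      ({w : List (Fin 2) | ∃ k : ℕ, w = c :: List.replicate (k * d) c'} : Language (Fin 2)) := by
  rintro ⟨k, hk⟩
  exact he (List.cons_eq_cons.mp hk).1

theorem chain_suffixFree (d : ℕ) (c c' : Fin 2) (hcc : c ≠ c') :
    SuffixFree ({w : List (Fin 2) | ∃ k : ℕ, w = c :: List.replicate (k * d) c'} :
      Language (Fin 2)) := by
  rintro u v ⟨k, rfl⟩ ⟨l, rfl⟩ ⟨p, hp⟩
  cases p with
  | nil => simpa using hp
  | cons e p =>
    exfalso
    rw [List.cons_append] at hp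
    obtain ⟨rfl, hp2⟩ := List.cons_eq_cons.mp hp
    have hc : e ∈ List.replicate (l * d) c' :=
      hp2 ▸ (List.mem_append.mpr (Or.inr List.mem_cons_self))
    exact hcc (List.eq_of_mem_replicate hc)

theorem cons_rep_append {t s : ℕ} {c c' : Fin 2} :
    (c :: List.replicate t c') ++ List.replicate s c' = c :: List.replicate (t + s) c' := by
  rw [List.cons_append, ← List.replicate_add]

end LangLemmas

section LowerBounds

theorem chain_NSCge (d : ℕ) (hd : 1 ≤ d) (c c' : Fin 2) (hcc : c ≠ c') :
    NSCge ({w : List (Fin 2) | ∃ k : ℕ, w = c :: List.replicate (k * d) c'} :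
      Language (Fin 2)) (d + 1) := by
  intro σ _ M hM
  set L : Language (Fin 2) :=
    {w : List (Fin 2) | ∃ k : ℕ, w = c :: List.replicate (k * d) c'} with hL
  let x : Option (Fin d) → List (Fin 2) := fun i => match i with
    | none => []
    | some i => c :: List.replicate i.val c'
  let y : Option (Fin d) → List (Fin 2) := fun i => match i with
    | none => [c]
    | some i => List.replicate (d - i.val) c'
  have hmem : ∀ i, x i ++ y i ∈ M.accepts := by
    rw [hM]
    rintro (_ | i)
    · exact ⟨0, by simp [x, y]⟩
    · refine ⟨1, ?_⟩
      show (c :: List.replicate i.val c') ++ List.replicate (d - i.val) c' =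
        c :: List.replicate (1 * d) c'
      rw [cons_rep_append]
      congr 2
      have := i.isLt
      omega
  have hcross : ∀ i j, x i ++ y j ∈ M.accepts → x j ++ y i ∈ M.accepts → i = j := by
    rw [hM]
    rintro (_ | i) (_ | j) h1 h2
    · rfl
    · exfalso
      have h2' : (c :: (List.replicate j.val c' ++ [c])) ∈ L := by
        rwa [← List.cons_append]
      exact not_mem_chainL_of_mem hcc
        (List.mem_append.mpr (Or.inr List.mem_cons_self)) h2'
    · exfalso
      have h1' : (c :: (List.replicate i.val c' ++ [c])) ∈ L := by
        rwa [← List.cons_append]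
      exact not_mem_chainL_of_mem hcc
        (List.mem_append.mpr (Or.inr List.mem_cons_self)) h1'
    · have h1' : (c :: List.replicate (i.val + (d - j.val)) c') ∈ L := by
        rwa [← cons_rep_append]
      obtain ⟨k, hk⟩ := mem_chainL.mp h1'
      have hi := i.isLt
      have hj := j.isLt
      have heq : i.val + (d - j.val) = d :=
        mul_window hk (by omega) (by omega)
      have : i = j := Fin.ext (by omega)
      rw [this]
  have hcard := M.fooling x y hmem hcross
  have : Fintype.card (Option (Fin d)) = d + 1 := by simp
  omega

end LowerBounds
section UnionLower

theorem union_NSCge (m n : ℕ) (hm : 2 ≤ m) (hn : 2 ≤ n) :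
    NSCge ({w : List (Fin 2) | ∃ k : ℕ, w = 1 :: List.replicate (k * (m - 1)) 0} ⊔
           {w : List (Fin 2) | ∃ k : ℕ, w = 0 :: List.replicate (k * (n - 1)) 1})
      (m + n - 1) := by
  intro σ _ M hM
  set LA : Language (Fin 2) :=
    {w : List (Fin 2) | ∃ k : ℕ, w = 1 :: List.replicate (k * (m - 1)) 0} with hLA
  set LB : Language (Fin 2) :=
    {w : List (Fin 2) | ∃ k : ℕ, w = 0 :: List.replicate (k * (n - 1)) 1} with hLB
  have hsup : ∀ v : List (Fin 2), v ∈ LA ⊔ LB ↔ (v ∈ LA ∨ v ∈ LB) := fun v => Iff.rfl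
  let x : Option (Fin (m - 1) ⊕ Fin (n - 1)) → List (Fin 2) := fun i => match i with
    | none => []
    | some (Sum.inl i) => 1 :: List.replicate i.val 0
    | some (Sum.inr j) => 0 :: List.replicate j.val 1
  let y : Option (Fin (m - 1) ⊕ Fin (n - 1)) → List (Fin 2) := fun i => match i with
    | none => 1 :: List.replicate (m - 1) 0
    | some (Sum.inl i) => List.replicate (m - 1 - i.val) 0
    | some (Sum.inr j) => List.replicate (n - 1 - j.val) 1
  have hmem : ∀ i, x i ++ y i ∈ M.accepts := by
    rw [hM]
    rintro (_ | i | j)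
    · refine (hsup _).mpr (Or.inl ⟨1, ?_⟩)
      show ([] : List (Fin 2)) ++ (1 :: List.replicate (m - 1) 0) =
        1 :: List.replicate (1 * (m - 1)) 0
      simp
    · refine (hsup _).mpr (Or.inl ⟨1, ?_⟩)
      show (1 :: List.replicate i.val 0) ++ List.replicate (m - 1 - i.val) 0 =
        1 :: List.replicate (1 * (m - 1)) 0
      rw [cons_rep_append]
      congr 2
      have := i.isLt
      omega
    · refine (hsup _).mpr (Or.inr ⟨1, ?_⟩)
      show (0 :: List.replicate j.val 1) ++ List.replicate (n - 1 - j.val) 1 =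
        0 :: List.replicate (1 * (n - 1)) 1
      rw [cons_rep_append]
      congr 2
      have := j.isLt
      omega
  have one_ne_zero2 : (1 : Fin 2) ≠ 0 := by decide
  have zero_ne_one2 : (0 : Fin 2) ≠ 1 := by decide
  -- the long word `c :: u ++ e :: v` is never in a chain language when the
  -- inner letter `e` breaks the pattern
  have hcross : ∀ i j, x i ++ y j ∈ M.accepts → x j ++ y i ∈ M.accepts → i = j := by
    rw [hM]
    have hbadA : ∀ (u v : List (Fin 2)),
        ((1 :: u) ++ (1 :: v) ∈ LA ⊔ LB) → False := by
      intro u v h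
      rcases (hsup _).mp h with h | h
      · rw [List.cons_append] at h
        exact not_mem_chainL_of_mem one_ne_zero2
          (List.mem_append.mpr (Or.inr List.mem_cons_self)) h
      · rw [List.cons_append] at h
        exact not_mem_chainL_of_head one_ne_zero2 _ h
    have hbadB : ∀ (u : List (Fin 2)),
        ((0 :: u) ++ (1 :: List.replicate (m - 1) 0) ∈ LA ⊔ LB) → False := by
      intro u h
      rcases (hsup _).mp h with h | h
      · rw [List.cons_append] at h
        exact not_mem_chainL_of_head zero_ne_one2 _ h
      · rw [List.cons_append] at h
        refine not_mem_chainL_of_mem zero_ne_one2 ?_ h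
        refine List.mem_append.mpr (Or.inr (List.mem_cons.mpr (Or.inr ?_)))
        exact List.mem_replicate.mpr ⟨by omega, rfl⟩
    rintro (_ | i | j) (_ | i' | j') h1 h2
    · rfl
    · exact absurd h2 (fun h => hbadA _ _ h)
    · exact absurd h2 (fun h => hbadB _ h)
    · exact absurd h1 (fun h => hbadA _ _ h)
    · -- inl i, inl i'
      have h1' : (1 :: List.replicate (i.val + (m - 1 - i'.val)) 0) ∈ LA ⊔ LB := by
        rwa [← cons_rep_append]
      have h1'' : (1 :: List.replicate (i.val + (m - 1 - i'.val)) 0) ∈ LA := by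
        rcases (hsup _).mp h1' with h | h
        · exact h
        · exact absurd h (not_mem_chainL_of_head one_ne_zero2 _)
      obtain ⟨k, hk⟩ := mem_chainL.mp h1''
      have hi := i.isLt
      have hi' := i'.isLt
      have heq : i.val + (m - 1 - i'.val) = m - 1 :=
        mul_window hk (by omega) (by omega)
      have : i = i' := Fin.ext (by omega)
      rw [this]
    · -- inl i, inr j'
      exfalso
      have hne : n - 1 - j'.val ≠ 0 := by have := j'.isLt; omega
      have h1' : (1 :: (List.replicate i.val 0 ++ List.replicate (n - 1 - j'.val) 1))
          ∈ LA ⊔ LB := by rwa [← List.cons_append]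
      rcases (hsup _).mp h1' with h | h
      · refine not_mem_chainL_of_mem one_ne_zero2 ?_ h
        exact List.mem_append.mpr (Or.inr (List.mem_replicate.mpr ⟨hne, rfl⟩))
      · exact not_mem_chainL_of_head one_ne_zero2 _ h
    · exact absurd h1 (fun h => hbadB _ h)
    · -- inr j, inl i'
      exfalso
      have hne : m - 1 - i'.val ≠ 0 := by have := i'.isLt; omega
      have h1' : (0 :: (List.replicate j.val 1 ++ List.replicate (m - 1 - i'.val) 0))
          ∈ LA ⊔ LB := by rwa [← List.cons_append]
      rcases (hsup _).mp h1' with h | h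
      · exact not_mem_chainL_of_head zero_ne_one2 _ h
      · refine not_mem_chainL_of_mem zero_ne_one2 ?_ h
        exact List.mem_append.mpr (Or.inr (List.mem_replicate.mpr ⟨hne, rfl⟩))
    · -- inr j, inr j'
      have h1' : (0 :: List.replicate (j.val + (n - 1 - j'.val)) 1) ∈ LA ⊔ LB := by
        rwa [← cons_rep_append]
      have h1'' : (0 :: List.replicate (j.val + (n - 1 - j'.val)) 1) ∈ LB := by
        rcases (hsup _).mp h1' with h | h
        · exact absurd h (not_mem_chainL_of_head zero_ne_one2 _)
        · exact h
      obtain ⟨k, hk⟩ := mem_chainL.mp h1''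
      have hj := j.isLt
      have hj' := j'.isLt
      have heq : j.val + (n - 1 - j'.val) = n - 1 :=
        mul_window hk (by omega) (by omega)
      have : j = j' := Fin.ext (by omega)
      rw [this]
  have hcard := M.fooling x y hmem hcross
  have : Fintype.card (Option (Fin (m - 1) ⊕ Fin (n - 1))) = (m - 1) + (n - 1) + 1 := by
    simp
  omega

end UnionLower

/-- **Union, lower bound witness.** For `m, n ≥ 2`, the suffix-free languages
`L₁ = b(a^{m-1})*` and `L₂ = a(b^{n-1})*` (over `{a, b}`, encoded as `a = 0`,
`b = 1` in `Fin 2`) satisfy `NSC(L₁) = m`, `NSC(L₂) = n` and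
`NSC(L₁ ∪ L₂) = m + n - 1`. -/
theorem union_lower_witness (m n : ℕ) (hm : 2 ≤ m) (hn : 2 ≤ n) :
    SuffixFree {w : List (Fin 2) | ∃ k : ℕ, w = 1 :: List.replicate (k * (m - 1)) 0} ∧
    SuffixFree {w : List (Fin 2) | ∃ k : ℕ, w = 0 :: List.replicate (k * (n - 1)) 1} ∧
    NSCeq {w : List (Fin 2) | ∃ k : ℕ, w = 1 :: List.replicate (k * (m - 1)) 0} m ∧
    NSCeq {w : List (Fin 2) | ∃ k : ℕ, w = 0 :: List.replicate (k * (n - 1)) 1} n ∧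
    NSCeq ({w : List (Fin 2) | ∃ k : ℕ, w = 1 :: List.replicate (k * (m - 1)) 0} ⊔
           {w : List (Fin 2) | ∃ k : ℕ, w = 0 :: List.replicate (k * (n - 1)) 1})
      (m + n - 1) := by
  haveI : NeZero (m - 1) := ⟨by omega⟩
  haveI : NeZero (n - 1) := ⟨by omega⟩
  have h10 : (1 : Fin 2) ≠ 0 := by decide
  have h01 : (0 : Fin 2) ≠ 1 := by decide
  refine ⟨chain_suffixFree (m - 1) 1 0 h10, chain_suffixFree (n - 1) 0 1 h01, ⟨?_, ?_⟩,
    ⟨?_, ?_⟩, ⟨?_, ?_⟩⟩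
  · exact ⟨Option (ZMod (m - 1)), inferInstance, chainNFA (m - 1) 1,
      chainNFA_accepts (m - 1) 1 0 h10, by
        rw [Fintype.card_option, ZMod.card]; omega⟩
  · have h := chain_NSCge (m - 1) (by omega) 1 0 h10
    have he : m - 1 + 1 = m := by omega
    rwa [he] at h
  · exact ⟨Option (ZMod (n - 1)), inferInstance, chainNFA (n - 1) 0,
      chainNFA_accepts (n - 1) 0 1 h01, by
        rw [Fintype.card_option, ZMod.card]; omega⟩
  · have h := chain_NSCge (n - 1) (by omega) 0 1 h01
    have he : n - 1 + 1 = n := by omega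
    rwa [he] at h
  · exact ⟨Option (ZMod (m - 1) ⊕ ZMod (n - 1)), inferInstance, unionNFA (m - 1) (n - 1),
      unionNFA_accepts (m - 1) (n - 1), by
        rw [Fintype.card_option, Fintype.card_sum, ZMod.card, ZMod.card]; omega⟩
  · exact union_NSCge m n hm hn
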